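/- arXiv:1809.10836 — 4 statements merged into one kernel-verified Lean document; each statement's English description precedes it below -/
import Mathlib

section
/- Let n ≥ 2 and fix i ∈ {2, …, n}. In B_n, let X_0 be a (possibly empty) product of band generators σ_{a,b} with 1 ≤ a < b ≤ i−1, and for each k = 1, …, i let X_k be a (possibly empty) product of band generators σ_{a,b} with k ≤ a < b ≤ n. Then the braid K = σ_{1,i}^{−1} · X_0 · X_i · σ_{i−1,i} · X_{i−1} · σ_{i−2,i−1} · X_{i−2} ⋯ σ_{1,2} · X_1 is strongly quasipositive. -/
/-- Relations for the braid group `Bₙ`: the generator `k : Fin (n-1)` represents `σ_{k+1}`,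
and we impose `σ_i σ_j = σ_j σ_i` for `|i - j| > 1` and `σ_i σ_{i+1} σ_i = σ_{i+1} σ_i σ_{i+1}`. -/
def braidRels (n : ℕ) : Set (FreeGroup (Fin (n - 1))) :=
  {r | ∃ i j : Fin (n - 1), (i : ℕ) + 1 < (j : ℕ) ∧
      r = FreeGroup.of i * FreeGroup.of j * (FreeGroup.of i)⁻¹ * (FreeGroup.of j)⁻¹} ∪
  {r | ∃ i j : Fin (n - 1), (j : ℕ) = (i : ℕ) + 1 ∧
      r = FreeGroup.of i * FreeGroup.of j * FreeGroup.of i *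
          (FreeGroup.of j * FreeGroup.of i * FreeGroup.of j)⁻¹}

/-- The braid group on `n` strands, presented with generators `σ_1, …, σ_{n-1}`. -/
abbrev BraidGroup (n : ℕ) : Type := PresentedGroup (braidRels n)

/-- The standard generator `σ_i` of `Bₙ`, for `1 ≤ i ≤ n - 1` (junk value `1` otherwise). -/
def sigma (n i : ℕ) : BraidGroup n :=
  if h : 1 ≤ i ∧ i ≤ n - 1 then PresentedGroup.of ⟨i - 1, by omega⟩ else 1

/-- The word `σ_{j-1} σ_{j-2} ⋯ σ_{i+1}`. -/
def bandConj (n i j : ℕ) : BraidGroup n :=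
  ((List.range (j - 1 - i)).map fun t => sigma n (j - 1 - t)).prod

/-- The band generator `σ_{i,j} = (σ_{j-1} σ_{j-2} ⋯ σ_{i+1}) σ_i (σ_{j-1} σ_{j-2} ⋯ σ_{i+1})⁻¹`.
In particular `σ_{i,i+1} = σ_i`. -/
def band (n i j : ℕ) : BraidGroup n :=
  bandConj n i j * sigma n i * (bandConj n i j)⁻¹

/-- The set of band generators `σ_{i,j}`, `1 ≤ i < j ≤ n`, of `Bₙ`. -/
def bandGens (n : ℕ) : Set (BraidGroup n) :=
  {x | ∃ i j : ℕ, 1 ≤ i ∧ i < j ∧ j ≤ n ∧ x = band n i j}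

/-- A braid is strongly quasipositive if it is a product of band generators, i.e. lies in the
submonoid generated by the `σ_{i,j}`, `1 ≤ i < j ≤ n`. -/
def StronglyQuasipositive (n : ℕ) (x : BraidGroup n) : Prop :=
  x ∈ Submonoid.closure (bandGens n)

/-- A braid is quasipositive if it lies in the submonoid generated by all conjugates
`α σ_k α⁻¹` of the standard generators. -/
def Quasipositive (n : ℕ) (x : BraidGroup n) : Prop :=
  x ∈ Submonoid.closure
    {x : BraidGroup n | ∃ (α : BraidGroup n) (k : ℕ), 1 ≤ k ∧ k ≤ n - 1 ∧ x = α * sigma n k * α⁻¹}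

namespace SQPAux

variable {n : ℕ}

lemma rel_eq_one {r : FreeGroup (Fin (n-1))} (hr : r ∈ braidRels n) :
    PresentedGroup.mk (braidRels n) r = 1 := by
  have : r ∈ Subgroup.normalClosure (braidRels n) := Subgroup.subset_normalClosure hr
  exact (QuotientGroup.eq_one_iff r).mpr this

lemma sigma_eq_of {k : ℕ} (h1 : 1 ≤ k) (h2 : k ≤ n - 1) :
    sigma n k = PresentedGroup.mk (braidRels n) (FreeGroup.of ⟨k - 1, by omega⟩) := by
  rw [sigma, dif_pos ⟨h1, h2⟩]; rfl

lemma sigma_eq_one {k : ℕ} (h : ¬(1 ≤ k ∧ k ≤ n - 1)) : sigma n k = 1 := dif_neg h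

lemma sigma_comm {k l : ℕ} (h : k + 2 ≤ l) : Commute (sigma n k) (sigma n l) := by
  rcases Nat.lt_or_ge k 1 with hk | hk
  · rw [sigma_eq_one (by omega)]; exact Commute.one_left _
  rcases Nat.lt_or_ge (n-1) l with hl | hl
  · rw [sigma_eq_one (k := l) (by omega)]; exact Commute.one_right _
  have hk2 : k ≤ n - 1 := by omega
  have hr : (FreeGroup.of ⟨k-1, by omega⟩ * FreeGroup.of ⟨l-1, by omega⟩ *
      (FreeGroup.of ⟨k-1, by omega⟩)⁻¹ * (FreeGroup.of (⟨l-1, by omega⟩ : Fin (n-1)))⁻¹)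
      ∈ braidRels n := by
    left
    exact ⟨⟨k-1, by omega⟩, ⟨l-1, by omega⟩, by simp; omega, rfl⟩
  have h1 := rel_eq_one hr
  rw [map_mul, map_mul, map_mul, map_inv, map_inv] at h1
  rw [sigma_eq_of hk hk2, sigma_eq_of (by omega : 1 ≤ l) hl]
  set x := PresentedGroup.mk (braidRels n) (FreeGroup.of (⟨k-1, by omega⟩ : Fin (n-1)))
  set y := PresentedGroup.mk (braidRels n) (FreeGroup.of (⟨l-1, by omega⟩ : Fin (n-1)))
  show x * y = y * x
  calc x * y = (x * y * x⁻¹ * y⁻¹) * (y * x) := by group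
  _ = y * x := by rw [h1]; group

lemma sigma_braid {k : ℕ} (h1 : 1 ≤ k) (h2 : k + 2 ≤ n) :
    sigma n k * sigma n (k+1) * sigma n k = sigma n (k+1) * sigma n k * sigma n (k+1) := by
  have hr : (FreeGroup.of ⟨k-1, by omega⟩ * FreeGroup.of ⟨k, by omega⟩ * FreeGroup.of ⟨k-1, by omega⟩ *
      (FreeGroup.of ⟨k, by omega⟩ * FreeGroup.of ⟨k-1, by omega⟩ * FreeGroup.of (⟨k, by omega⟩ : Fin (n-1)))⁻¹)
      ∈ braidRels n := by
    right
    exact ⟨⟨k-1, by omega⟩, ⟨k, by omega⟩, by simp; omega, rfl⟩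
  have h1' := rel_eq_one hr
  rw [map_mul, map_mul, map_mul, map_inv] at h1'
  rw [sigma_eq_of h1 (by omega), sigma_eq_of (by omega : 1 ≤ k+1) (by omega)]
  have hk1 : k + 1 - 1 = k := rfl
  rw [mul_inv_eq_one, map_mul, map_mul] at h1'
  convert h1' using 3 <;> rfl

/-- descending word σ_p σ_{p-1} ⋯ σ_q -/
def desc (n p q : ℕ) : BraidGroup n :=
  ((List.range (p + 1 - q)).map fun t => sigma n (p - t)).prod

lemma desc_empty {p q : ℕ} (h : p + 1 ≤ q) : desc n p q = 1 := by
  unfold desc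
  rw [show p + 1 - q = 0 from by omega]
  simp

lemma desc_succ {p q : ℕ} (hq : 1 ≤ q) (h : q ≤ p) :
    desc n p q = sigma n p * desc n (p-1) q := by
  unfold desc
  rw [show p + 1 - q = (p - q) + 1 from by omega, List.range_succ_eq_map,
      List.map_cons, List.prod_cons, Nat.sub_zero, List.map_map]
  congr 1
  rw [show p - 1 + 1 - q = p - q from by omega]
  congr 1
  apply List.map_congr_left
  intro t ht
  simp only [Function.comp_apply]
  congr 1
  omega

lemma bandConj_eq_desc {i j : ℕ} (h : 1 ≤ j) : bandConj n i j = desc n (j-1) (i+1) := by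
  unfold bandConj desc
  rw [show j - 1 + 1 - (i+1) = j - 1 - i from by omega]

lemma commute_desc {x : BraidGroup n} {p q : ℕ}
    (h : ∀ m, q ≤ m → m ≤ p → Commute x (sigma n m)) : Commute x (desc n p q) := by
  apply Commute.list_prod_right
  intro y hy
  simp only [List.mem_map, List.mem_range] at hy
  obtain ⟨t, ht, rfl⟩ := hy
  exact h _ (by omega) (by omega)

lemma desc_split {p q r : ℕ} (hq : 1 ≤ q) (h1 : q ≤ r) (h2 : r ≤ p + 1) :
    desc n p q = desc n p r * desc n (r-1) q := by
  induction p with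
  | zero =>
    have hq1 : q = 1 := by omega
    have hr1 : r = 1 := by omega
    subst hq1; subst hr1
    rw [desc_empty (le_refl 1)]; simp [desc_empty]
  | succ p ih =>
    rcases Nat.eq_or_lt_of_le h2 with h | h
    · rw [desc_empty (by omega : p + 1 + 1 ≤ r), one_mul, show r - 1 = p + 1 from by omega]
    · have hr : r ≤ p + 1 := by omega
      rw [desc_succ hq (by omega : q ≤ p + 1), desc_succ (by omega : 1 ≤ r) (by omega : r ≤ p + 1)]
      simp only [Nat.add_sub_cancel]
      rw [ih hr, mul_assoc]

lemma desc_right {p q : ℕ} (hq : 1 ≤ q) (h : q ≤ p) :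
    desc n p q = desc n p (q+1) * sigma n q := by
  rw [desc_split hq (Nat.le_succ q) (by omega : q + 1 ≤ p + 1)]
  congr 1
  rw [show q + 1 - 1 = q from rfl, desc_succ hq (le_refl q), desc_empty (by omega)]
  simp

lemma shift {q m : ℕ} (p : ℕ) (hq : 1 ≤ q) (h1 : q ≤ m) : m + 1 ≤ p → p + 1 ≤ n →
    sigma n m * desc n p q = desc n p q * sigma n (m+1) := by
  induction p with
  | zero => omega
  | succ p ih =>
    intro h2 hp
    rcases Nat.eq_or_lt_of_le h2 with h | h
    · -- m + 1 = p + 1, i.e. p = m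
      have hpm : m = p := by omega
      subst hpm
      rw [desc_succ hq (by omega : q ≤ m + 1)]
      simp only [Nat.add_sub_cancel]
      rw [desc_succ hq (by omega : q ≤ m)]
      have hb := sigma_braid (n := n) (by omega : 1 ≤ m) (by omega)
      have hc : Commute (sigma n (m+1)) (desc n (m-1) q) := by
        apply commute_desc
        intro r hr1 hr2
        exact (sigma_comm (by omega)).symm
      calc sigma n m * (sigma n (m+1) * (sigma n m * desc n (m-1) q))
          = (sigma n m * sigma n (m+1) * sigma n m) * desc n (m-1) q := by group
        _ = (sigma n (m+1) * sigma n m * sigma n (m+1)) * desc n (m-1) q := by rw [hb]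
        _ = sigma n (m+1) * sigma n m * (sigma n (m+1) * desc n (m-1) q) := by group
        _ = sigma n (m+1) * sigma n m * (desc n (m-1) q * sigma n (m+1)) := by rw [hc.eq]
        _ = sigma n (m+1) * (sigma n m * desc n (m-1) q) * sigma n (m+1) := by group
    · -- m + 1 < p + 1
      rw [desc_succ hq (by omega : q ≤ p + 1)]
      simp only [Nat.add_sub_cancel]
      have hcomm : Commute (sigma n m) (sigma n (p+1)) := sigma_comm (by omega)
      rw [← mul_assoc, hcomm.eq, mul_assoc, ih (by omega) (by omega), mul_assoc]

lemma band_eq {a b : ℕ} (hb : 1 ≤ b) :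
    band n a b = desc n (b-1) (a+1) * sigma n a * (desc n (b-1) (a+1))⁻¹ := by
  rw [band, bandConj_eq_desc hb]

lemma band_adj {a : ℕ} : band n a (a+1) = sigma n a := by
  rw [band_eq (by omega), desc_empty (by omega)]
  simp

lemma commute_band {x : BraidGroup n} {a b : ℕ} (hb : 1 ≤ b)
    (h : ∀ m, a ≤ m → m + 1 ≤ b → Commute x (sigma n m)) (hab : a < b) :
    Commute x (band n a b) := by
  rw [band_eq hb]
  have h1 : Commute x (desc n (b-1) (a+1)) := by
    apply commute_desc
    intro m hm1 hm2
    exact h m (by omega) (by omega)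
  exact Commute.mul_right (Commute.mul_right h1 (h a (le_refl a) hab)) h1.inv_right

/-- `band n a (b+1) = σ_b (band n a b) σ_b⁻¹` for `a < b`. -/
lemma band_succ {a b : ℕ} (hab : a < b) :
    band n a (b+1) = sigma n b * band n a b * (sigma n b)⁻¹ := by
  rw [band_eq (by omega), band_eq (by omega)]
  simp only [Nat.add_sub_cancel]
  rw [desc_succ (by omega : 1 ≤ a + 1) (by omega : a + 1 ≤ b)]
  group

/-- the pseudo-Artin braid relation: `σ_{1,b} σ_b σ_{1,b} = σ_b σ_{1,b} σ_b`. -/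
lemma band1_braid (b : ℕ) (h2 : 2 ≤ b) (hb : b + 1 ≤ n) :
    band n 1 b * sigma n b * band n 1 b = sigma n b * band n 1 b * sigma n b := by
  induction b with
  | zero => omega
  | succ b ih =>
    rcases Nat.eq_or_lt_of_le h2 with h | h
    · -- b + 1 = 2
      have : b = 1 := by omega
      subst this
      rw [show (1:ℕ) + 1 = 2 from rfl, show band n 1 2 = sigma n 1 from band_adj]
      exact sigma_braid (by omega) (by omega)
    · -- 2 ≤ b
      have h2b : 2 ≤ b := by omega
      have hbn : b + 1 ≤ n := by omega
      have ihb := ih h2b hbn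
      have hrec : band n 1 (b+1) = sigma n b * band n 1 b * (sigma n b)⁻¹ :=
        band_succ (by omega)
      have hfar : Commute (band n 1 b) (sigma n (b+1)) := by
        refine (commute_band (x := sigma n (b+1)) (by omega) ?_ (by omega)).symm
        intro m hm1 hm2
        exact (sigma_comm (k := m) (l := b+1) (by omega)).symm
      have hbr : sigma n b * sigma n (b+1) * sigma n b
          = sigma n (b+1) * sigma n b * sigma n (b+1) := sigma_braid (by omega) (by omega)
      set x := sigma n b with hx
      set y := sigma n (b+1) with hy
      set β := band n 1 b with hβ
      have c1 : x⁻¹ * y * x = y * x * y⁻¹ := by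
        calc x⁻¹*y*x = x⁻¹*(y*x*y)*y⁻¹ := by group
          _ = x⁻¹*(x*y*x)*y⁻¹ := by rw [hbr]
          _ = y*x*y⁻¹ := by group
      have c2 : β*(y*x*y⁻¹)*β = y*(β*x*β)*y⁻¹ := by
        calc β*(y*x*y⁻¹)*β = (β*y)*x*(y⁻¹*β) := by group
          _ = (y*β)*x*(β*y⁻¹) := by rw [hfar.eq, ← hfar.inv_right.eq]
          _ = y*(β*x*β)*y⁻¹ := by group
      rw [hrec]
      calc x*β*x⁻¹*y*(x*β*x⁻¹)
          = x*(β*(x⁻¹*y*x)*β)*x⁻¹ := by group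
        _ = x*(β*(y*x*y⁻¹)*β)*x⁻¹ := by rw [c1]
        _ = x*(y*(β*x*β)*y⁻¹)*x⁻¹ := by rw [c2]
        _ = x*(y*(x*β*x)*y⁻¹)*x⁻¹ := by rw [ihb]
        _ = (x*y*x)*β*(x*y⁻¹*x⁻¹) := by group
        _ = (y*x*y)*β*(x*y⁻¹*x⁻¹) := by rw [hbr]
        _ = y*x*(y*β)*x*y⁻¹*x⁻¹ := by group
        _ = y*x*(β*y)*x*y⁻¹*x⁻¹ := by rw [← hfar.eq]
        _ = y*x*β*(y*x*y⁻¹)*x⁻¹ := by group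
        _ = y*x*β*(x⁻¹*y*x)*x⁻¹ := by rw [← c1]
        _ = y*(x*β*x⁻¹)*y := by group

/-- `σ_{1,j}` commutes with `σ_m` for `2 ≤ m ≤ j-2`. -/
lemma band1_comm_sigma {m j : ℕ} (h2 : 2 ≤ m) (hm : m + 2 ≤ j) (hj : j ≤ n) :
    Commute (band n 1 j) (sigma n m) := by
  have E := shift (n := n) (q := 2) (m := m) (j-1) (by norm_num) h2 (by omega) (by omega)
  set Δ := desc n (j-1) 2 with hΔ
  have hc : Commute (sigma n 1) (sigma n (m+1)) := sigma_comm (by omega)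
  have : sigma n m * band n 1 j = band n 1 j * sigma n m := by
    rw [band_eq (by omega : 1 ≤ j)]
    calc sigma n m * (Δ * sigma n 1 * Δ⁻¹)
        = (sigma n m * Δ) * sigma n 1 * Δ⁻¹ := by group
      _ = (Δ * sigma n (m+1)) * sigma n 1 * Δ⁻¹ := by rw [E]
      _ = Δ * (sigma n (m+1) * sigma n 1) * Δ⁻¹ := by group
      _ = Δ * (sigma n 1 * sigma n (m+1)) * Δ⁻¹ := by rw [hc.symm.eq]
      _ = Δ * sigma n 1 * Δ⁻¹ * ((Δ * sigma n (m+1)) * Δ⁻¹) := by group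
      _ = Δ * sigma n 1 * Δ⁻¹ * ((sigma n m * Δ) * Δ⁻¹) := by rw [← E]
      _ = Δ * sigma n 1 * Δ⁻¹ * sigma n m := by group
  exact this.symm

/-- F1: `σ_{1,j}` commutes with `σ_{a,b}` for `2 ≤ a < b ≤ j-1` (nested). -/
lemma band1_comm_nested {a b j : ℕ} (ha : 2 ≤ a) (hab : a < b) (hbj : b + 1 ≤ j) (hj : j ≤ n) :
    Commute (band n 1 j) (band n a b) := by
  apply commute_band (by omega) ?_ hab
  intro m hm1 hm2
  exact band1_comm_sigma (by omega) (by omega) hj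

/-- F2: `σ_{1,j}` commutes with `σ_{a,b}` for `j < a < b` (disjoint). -/
lemma band1_comm_far {a b j : ℕ} (hj2 : 2 ≤ j) (hja : j < a) (hab : a < b) (hbn : b ≤ n) :
    Commute (band n 1 j) (band n a b) := by
  apply commute_band (by omega) ?_ hab
  intro m hm1 hm2
  refine (commute_band (x := sigma n m) (by omega) ?_ (by omega : 1 < j)).symm
  intro r hr1 hr2
  exact (sigma_comm (by omega : r + 2 ≤ m)).symm

/-- F3: `σ_{1,j}⁻¹ σ_{1,b} σ_{1,j} = σ_{b,j}` for `2 ≤ b < j`. -/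
lemma band1_conj_low {b j : ℕ} (hb2 : 2 ≤ b) (hbj : b < j) (hj : j ≤ n) :
    (band n 1 j)⁻¹ * band n 1 b * band n 1 j = band n b j := by
  set β := band n 1 b with hβ
  set F := desc n (j-1) (b+1) with hF
  set x := sigma n b with hx
  have e1 : band n 1 j = (F * x) * β * (F * x)⁻¹ := by
    rw [band_eq (by omega : 1 ≤ j),
        desc_split (by norm_num : 1 ≤ 2) (by omega : 2 ≤ b) (by omega : b ≤ j - 1 + 1),
        desc_right (by omega : 1 ≤ b) (by omega : b ≤ j - 1), hβ,
        band_eq (by omega : 1 ≤ b)]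
    norm_num
    rw [← hF, ← hx]
    group
  have e3 : Commute β F := by
    apply commute_desc
    intro m hm1 hm2
    refine (commute_band (x := sigma n m) (by omega) ?_ (by omega : 1 < b)).symm
    intro r hr1 hr2
    exact (sigma_comm (by omega : r + 2 ≤ m)).symm
  have e3' : F⁻¹ * β * F = β := by
    calc F⁻¹ * β * F = F⁻¹ * (β * F) := by group
      _ = F⁻¹ * (F * β) := by rw [e3.eq]
      _ = β := by group
  have e4 : β * x * β = x * β * x := band1_braid b hb2 (by omega)
  rw [e1, band_eq (by omega : 1 ≤ j)]
  calc ((F*x)*β*(F*x)⁻¹)⁻¹ * β * ((F*x)*β*(F*x)⁻¹)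
      = F*x*β⁻¹*x⁻¹*(F⁻¹*β*F)*x*β*x⁻¹*F⁻¹ := by group
    _ = F*x*β⁻¹*x⁻¹*β*x*β*x⁻¹*F⁻¹ := by rw [e3']
    _ = F*x*β⁻¹*(x⁻¹*(β*x*β))*x⁻¹*F⁻¹ := by group
    _ = F*x*β⁻¹*(x⁻¹*(x*β*x))*x⁻¹*F⁻¹ := by rw [e4]
    _ = F*x*F⁻¹ := by group
    _ = desc n (j-1) (b+1) * sigma n b * (desc n (j-1) (b+1))⁻¹ := rfl

/-- F4: `σ_{1,j}⁻¹ σ_{j,b} σ_{1,j} = σ_{1,b}` for `2 ≤ j < b ≤ n`. -/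
lemma band1_conj_high {b j : ℕ} (hj2 : 2 ≤ j) (hjb : j < b) (hbn : b ≤ n) :
    (band n 1 j)⁻¹ * band n j b * band n 1 j = band n 1 b := by
  set B := band n 1 j with hB
  set F := desc n (b-1) (j+1) with hF
  set x := sigma n j with hx
  have cf : Commute B F := by
    apply commute_desc
    intro m hm1 hm2
    refine (commute_band (x := sigma n m) (by omega) ?_ (by omega : 1 < j)).symm
    intro r hr1 hr2
    exact (sigma_comm (by omega : r + 2 ≤ m)).symm
  have e4 : B * x * B = x * B * x := band1_braid j hj2 (by omega)
  have key : B⁻¹ * x * B = x * B * x⁻¹ := by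
    calc B⁻¹*x*B = B⁻¹*(x*B*x)*x⁻¹ := by group
      _ = B⁻¹*(B*x*B)*x⁻¹ := by rw [e4]
      _ = x*B*x⁻¹ := by group
  have e5 : band n 1 b = F*(x*B*x⁻¹)*F⁻¹ := by
    rw [band_eq (by omega : 1 ≤ b),
        desc_split (by norm_num : 1 ≤ 2) (by omega : 2 ≤ j + 1) (by omega : j + 1 ≤ b - 1 + 1),
        desc_succ (by norm_num : 1 ≤ 2) (by omega : 2 ≤ j + 1 - 1), hB,
        band_eq (by omega : 1 ≤ j)]
    norm_num
    rw [← hF, ← hx]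
    group
  rw [band_eq (by omega : 1 ≤ b), e5]
  calc B⁻¹ * (F*x*F⁻¹) * B = (B⁻¹*F)*x*(F⁻¹*B) := by group
    _ = (F*B⁻¹)*x*(B*F⁻¹) := by rw [cf.inv_left.eq, ← cf.inv_right.eq]
    _ = F*(B⁻¹*x*B)*F⁻¹ := by group
    _ = F*(x*B*x⁻¹)*F⁻¹ := by rw [key]

lemma conj_closure {g : BraidGroup n} {S : Set (BraidGroup n)} {x : BraidGroup n}
    (hx : x ∈ Submonoid.closure S)
    (h : ∀ y ∈ S, g⁻¹ * y * g ∈ Submonoid.closure (bandGens n)) :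
    g⁻¹ * x * g ∈ Submonoid.closure (bandGens n) := by
  induction hx using Submonoid.closure_induction with
  | mem y hy => exact h y hy
  | one =>
    have h1 : g⁻¹ * 1 * g = 1 := by group
    rw [h1]; exact Submonoid.one_mem _
  | mul y z hy hz ihy ihz =>
    have h1 : g⁻¹ * (y * z) * g = (g⁻¹ * y * g) * (g⁻¹ * z * g) := by group
    rw [h1]; exact Submonoid.mul_mem _ ihy ihz

def tailProd (n : ℕ) (X : ℕ → BraidGroup n) (j : ℕ) : BraidGroup n :=
  ((List.range (j - 1)).map fun t => band n (j - 1 - t) (j - t) * X (j - 1 - t)).prod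

lemma tailProd_two {X : ℕ → BraidGroup n} : tailProd n X 2 = band n 1 2 * X 1 := by
  unfold tailProd
  rw [show (2:ℕ) - 1 = 1 from rfl, show List.range 1 = [0] from rfl, List.map_cons, List.map_nil,
      List.prod_cons, List.prod_nil, mul_one]

lemma tailProd_succ {X : ℕ → BraidGroup n} {j : ℕ} (h : 1 ≤ j) :
    tailProd n X (j+1) = band n j (j+1) * X j * tailProd n X j := by
  obtain ⟨k, rfl⟩ : ∃ k, j = k + 1 := ⟨j-1, by omega⟩
  unfold tailProd
  rw [show k + 1 + 1 - 1 = k + 1 from rfl, List.range_succ_eq_map,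
      List.map_cons, List.prod_cons, List.map_map]
  have hmap : List.map ((fun t => band n (k + 1 - t) (k + 1 + 1 - t) * X (k + 1 - t)) ∘ Nat.succ)
        (List.range k)
      = List.map (fun t => band n (k + 1 - 1 - t) (k + 1 - t) * X (k + 1 - 1 - t))
        (List.range k) := by
    apply List.map_congr_left
    intro t ht
    simp only [Function.comp_apply]
    rw [show k + 1 - (t+1) = k + 1 - 1 - t from by omega,
        show k + 1 + 1 - (t+1) = k + 1 - t from by omega]
  rw [hmap]
  simp only [Nat.sub_zero, Nat.add_sub_cancel]

lemma band_mem {a b : ℕ} (h1 : 1 ≤ a) (h2 : a < b) (h3 : b ≤ n) :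
    band n a b ∈ Submonoid.closure (bandGens n) :=
  Submonoid.subset_closure ⟨a, b, h1, h2, h3, rfl⟩

theorem main (n i : ℕ) (hn : 2 ≤ n) (hi2 : 2 ≤ i) (hin : i ≤ n)
    (X0 : BraidGroup n)
    (hX0 : X0 ∈ Submonoid.closure
      {x : BraidGroup n | ∃ a b : ℕ, 1 ≤ a ∧ a < b ∧ b ≤ i - 1 ∧ x = band n a b})
    (X : ℕ → BraidGroup n)
    (hX : ∀ k : ℕ, 1 ≤ k → k ≤ i → X k ∈ Submonoid.closure
      {x : BraidGroup n | ∃ a b : ℕ, k ≤ a ∧ a < b ∧ b ≤ n ∧ x = band n a b}) :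
    ((band n 1 i)⁻¹ * X0 * X i * tailProd n X i) ∈ Submonoid.closure (bandGens n) := by
  -- conjugation of the X_k's (k ≥ 2 needed for the tail) by (band n 1 k)⁻¹ lands in SQP
  have conjX : ∀ k, 2 ≤ k → k ≤ i →
      (band n 1 k)⁻¹ * X k * band n 1 k ∈ Submonoid.closure (bandGens n) := by
    intro k hk2 hki
    apply conj_closure (hX k (by omega) hki)
    rintro y ⟨a, b, hka, hab, hbn, rfl⟩
    rcases Nat.eq_or_lt_of_le hka with h | h
    · -- a = k
      subst h
      rw [band1_conj_high hk2 hab hbn]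
      exact band_mem (by omega) (by omega) hbn
    · -- k < a
      have hc : Commute (band n 1 k) (band n a b) := band1_comm_far hk2 h hab hbn
      have he : (band n 1 k)⁻¹ * band n a b * band n 1 k = band n a b := by
        calc (band n 1 k)⁻¹ * band n a b * band n 1 k
            = (band n 1 k)⁻¹ * (band n a b * band n 1 k) := by group
          _ = (band n 1 k)⁻¹ * (band n 1 k * band n a b) := by rw [hc.symm.eq]
          _ = band n a b := by group
      rw [he]
      exact band_mem (by omega) hab hbn
  -- the key induction
  have C : ∀ j, 2 ≤ j → j ≤ i →
      (band n 1 j)⁻¹ * tailProd n X j ∈ Submonoid.closure (bandGens n) := by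
    intro j h2
    induction j, h2 using Nat.le_induction with
    | base =>
      intro h2i
      rw [tailProd_two]
      have he : (band n 1 2)⁻¹ * (band n 1 2 * X 1) = X 1 := by group
      rw [he]
      exact hX 1 le_rfl (by omega)
    | succ j hj ih =>
      intro hji
      rw [tailProd_succ (by omega : 1 ≤ j), band_succ (by omega : 1 < j), band_adj]
      have he : (sigma n j * band n 1 j * (sigma n j)⁻¹)⁻¹ *
          (sigma n j * X j * tailProd n X j) =
          sigma n j * ((band n 1 j)⁻¹ * X j * band n 1 j) *
            ((band n 1 j)⁻¹ * tailProd n X j) := by group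
      rw [he]
      refine Submonoid.mul_mem _ (Submonoid.mul_mem _ ?_ ?_) ?_
      · rw [← band_adj (n := n) (a := j)]
        exact band_mem (by omega) (by omega) (by omega)
      · exact conjX j hj (by omega)
      · exact ih (by omega)
  have he : (band n 1 i)⁻¹ * X0 * X i * tailProd n X i =
      ((band n 1 i)⁻¹ * X0 * band n 1 i) * ((band n 1 i)⁻¹ * X i * band n 1 i) *
        ((band n 1 i)⁻¹ * tailProd n X i) := by group
  rw [he]
  refine Submonoid.mul_mem _ (Submonoid.mul_mem _ ?_ ?_) (C i hi2 le_rfl)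
  · apply conj_closure hX0
    rintro y ⟨a, b, ha, hab, hbi, rfl⟩
    rcases Nat.eq_or_lt_of_le ha with h | h
    · -- a = 1
      subst h
      rw [band1_conj_low (by omega) (by omega) hin]
      exact band_mem (by omega) (by omega) hin
    · have hc : Commute (band n 1 i) (band n a b) :=
        band1_comm_nested (by omega) hab (by omega) hin
      have he2 : (band n 1 i)⁻¹ * band n a b * band n 1 i = band n a b := by
        calc (band n 1 i)⁻¹ * band n a b * band n 1 i
            = (band n 1 i)⁻¹ * (band n a b * band n 1 i) := by group
          _ = (band n 1 i)⁻¹ * (band n 1 i * band n a b) := by rw [hc.symm.eq]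
          _ = band n a b := by group
      rw [he2]
      exact band_mem (by omega) hab (by omega)
  · exact conjX i hi2 le_rfl

end SQPAux

/-- Lemma 3.3 of Hayden–Ito–Kawamuro: with `X₀` a product of band generators `σ_{a,b}`,
`1 ≤ a < b ≤ i-1`, and each `X_k` (`1 ≤ k ≤ i`) a product of band generators `σ_{a,b}`,
`k ≤ a < b ≤ n`, the braid
`K = σ_{1,i}⁻¹ X₀ X_i σ_{i-1,i} X_{i-1} σ_{i-2,i-1} X_{i-2} ⋯ σ_{1,2} X_1`
is strongly quasipositive. -/
theorem lemma_SQP1 (n i : ℕ) (hn : 2 ≤ n) (hi2 : 2 ≤ i) (hin : i ≤ n)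
    (X0 : BraidGroup n)
    (hX0 : X0 ∈ Submonoid.closure
      {x : BraidGroup n | ∃ a b : ℕ, 1 ≤ a ∧ a < b ∧ b ≤ i - 1 ∧ x = band n a b})
    (X : ℕ → BraidGroup n)
    (hX : ∀ k : ℕ, 1 ≤ k → k ≤ i → X k ∈ Submonoid.closure
      {x : BraidGroup n | ∃ a b : ℕ, k ≤ a ∧ a < b ∧ b ≤ n ∧ x = band n a b}) :
    StronglyQuasipositive n
      ((band n 1 i)⁻¹ * X0 * X i *
        ((List.range (i - 1)).map fun t => band n (i - 1 - t) (i - t) * X (i - 1 - t)).prod) := by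
  exact SQPAux.main n i hn hi2 hin X0 hX0 X hX
end

section
/- In B_n, if P is a (possibly empty) product of the generators σ_2, …, σ_{n−1} and Q is a (possibly empty) product of the generators σ_1, …, σ_{n−1}, then the braid σ_1^{−1} P σ_1 Q is strongly quasipositive. -/
lemma braid_mk_rel_one {n : ℕ} {r : FreeGroup (Fin (n - 1))} (hr : r ∈ braidRels n) :
    PresentedGroup.mk (braidRels n) r = 1 :=
  (QuotientGroup.eq_one_iff r).mpr (Subgroup.subset_normalClosure hr)

lemma braid_comm {n : ℕ} (i j : Fin (n - 1)) (h : (i : ℕ) + 1 < j) :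
    (PresentedGroup.of i : BraidGroup n) * PresentedGroup.of j =
      PresentedGroup.of j * PresentedGroup.of i := by
  have h1 := braid_mk_rel_one (n := n) (Or.inl ⟨i, j, h, rfl⟩)
  simp only [map_mul, map_inv] at h1
  have h2 := mul_inv_eq_one.mp h1
  have h3 := mul_inv_eq_iff_eq_mul.mp h2
  exact h3

lemma braid_rel {n : ℕ} (i j : Fin (n - 1)) (h : (j : ℕ) = (i : ℕ) + 1) :
    (PresentedGroup.of i : BraidGroup n) * PresentedGroup.of j * PresentedGroup.of i =
      PresentedGroup.of j * PresentedGroup.of i * PresentedGroup.of j := by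
  have h1 := braid_mk_rel_one (n := n) (Or.inr ⟨i, j, h, rfl⟩)
  simp only [map_mul, map_inv] at h1
  exact mul_inv_eq_one.mp h1

lemma band_succ {n k : ℕ} : band n k (k + 1) = sigma n k := by
  have h0 : k + 1 - 1 - k = 0 := by omega
  simp [band, bandConj, h0]

lemma sigma_mem_bandGens {n k : ℕ} (h1 : 1 ≤ k) (h2 : k ≤ n - 1) :
    sigma n k ∈ bandGens n := ⟨k, k + 1, h1, by omega, by omega, band_succ.symm⟩

lemma band_one_three {n : ℕ} : band n 1 3 = sigma n 2 * sigma n 1 * (sigma n 2)⁻¹ := by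
  have h1 : (3 : ℕ) - 1 - 1 = 1 := by norm_num
  rw [band, bandConj, h1]
  show [sigma n (2 - 0)].prod * sigma n 1 * [sigma n (2 - 0)].prod⁻¹ = _
  simp

lemma conj_mem {n : ℕ} {k : ℕ} (h1 : 2 ≤ k) (h2 : k ≤ n - 1) :
    (sigma n 1)⁻¹ * sigma n k * sigma n 1 ∈ Submonoid.closure (bandGens n) := by
  have hn3 : 3 ≤ n := by omega
  have hs1 : sigma n 1 = (PresentedGroup.of ⟨0, by omega⟩ : BraidGroup n) := by
    rw [sigma]; rw [dif_pos ⟨le_refl 1, by omega⟩]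
  rcases eq_or_lt_of_le h1 with hk2 | hk3
  · -- k = 2
    have hs2 : sigma n 2 = (PresentedGroup.of ⟨1, by omega⟩ : BraidGroup n) := by
      rw [sigma]; rw [dif_pos ⟨by norm_num, by omega⟩]
    have hbr := braid_rel (n := n) ⟨0, by omega⟩ ⟨1, by omega⟩ rfl
    set a : BraidGroup n := PresentedGroup.of ⟨0, by omega⟩
    set b : BraidGroup n := PresentedGroup.of ⟨1, by omega⟩
    have key : a⁻¹ * b * a = b * a * b⁻¹ := by
      have : a⁻¹ * b * a = a⁻¹ * (b * a * b) * b⁻¹ := by group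
      rw [this, ← hbr]
      group
    rw [← hk2, hs1, hs2, key]
    apply Submonoid.subset_closure
    refine ⟨1, 3, le_refl 1, by norm_num, hn3, ?_⟩
    rw [band_one_three, hs1, hs2]
  · -- k ≥ 3
    have hsk : sigma n k = (PresentedGroup.of ⟨k - 1, by omega⟩ : BraidGroup n) := by
      rw [sigma]; rw [dif_pos ⟨by omega, h2⟩]
    have hc := braid_comm (n := n) ⟨0, by omega⟩ ⟨k - 1, by omega⟩ (by simp; omega)
    have : (sigma n 1)⁻¹ * sigma n k * sigma n 1 = sigma n k := by
      rw [hs1, hsk, mul_assoc, ← hc]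
      group
    rw [this]
    exact Submonoid.subset_closure (sigma_mem_bandGens (by omega) h2)

/-- If `P` is a product of the generators `σ_2, …, σ_{n-1}` and `Q` is a product of the
generators `σ_1, …, σ_{n-1}`, then `σ_1⁻¹ P σ_1 Q` is strongly quasipositive. -/
theorem sqp_of_conj_form (n : ℕ) (hn : 2 ≤ n) (P Q : BraidGroup n)
    (hP : P ∈ Submonoid.closure {x : BraidGroup n | ∃ k : ℕ, 2 ≤ k ∧ k ≤ n - 1 ∧ x = sigma n k})
    (hQ : Q ∈ Submonoid.closure {x : BraidGroup n | ∃ k : ℕ, 1 ≤ k ∧ k ≤ n - 1 ∧ x = sigma n k}) :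
    StronglyQuasipositive n ((sigma n 1)⁻¹ * P * sigma n 1 * Q) := by
  set S := Submonoid.closure (bandGens n)
  have hPS : (sigma n 1)⁻¹ * P * sigma n 1 ∈ S := by
    refine Submonoid.closure_induction
      (motive := fun x _ => (sigma n 1)⁻¹ * x * sigma n 1 ∈ S) ?_ ?_ ?_ hP
    · rintro x ⟨k, hk1, hk2, rfl⟩
      exact conj_mem hk1 hk2
    · simpa using one_mem S
    · intro x y _ _ hx hy
      have : (sigma n 1)⁻¹ * (x * y) * sigma n 1 =
          ((sigma n 1)⁻¹ * x * sigma n 1) * ((sigma n 1)⁻¹ * y * sigma n 1) := by group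
      rw [this]
      exact mul_mem hx hy
  have hQS : Q ∈ S := by
    refine Submonoid.closure_mono ?_ hQ
    rintro x ⟨k, hk1, hk2, rfl⟩
    exact sigma_mem_bandGens hk1 hk2
  have : (sigma n 1)⁻¹ * P * sigma n 1 * Q =
      ((sigma n 1)⁻¹ * P * sigma n 1) * Q := by group
  rw [StronglyQuasipositive, this]
  exact mul_mem hPS hQS
end

section
/- In B_3 set a_1 = σ_1, a_2 = σ_2, and a_3 = σ_2 σ_1 σ_2^{−1} (the band generator σ_{1,3}). For all integers n_1, n_2, n_3 ≥ 1 and every (possibly empty) product W of the elements a_1, a_2, a_3, the braid a_1^{−1} a_2^{n_1} a_3^{n_2} a_1^{n_3} W is quasipositive. -/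
lemma sigma31 : sigma 3 1 = PresentedGroup.of (⟨0, by omega⟩ : Fin (3 - 1)) := by
  simp [sigma]

lemma sigma32 : sigma 3 2 = PresentedGroup.of (⟨1, by omega⟩ : Fin (3 - 1)) := by
  simp [sigma]

lemma braid_rel3 : sigma 3 1 * sigma 3 2 * sigma 3 1 = sigma 3 2 * sigma 3 1 * sigma 3 2 := by
  rw [sigma31, sigma32]
  set i : Fin (3 - 1) := ⟨0, by omega⟩
  set j : Fin (3 - 1) := ⟨1, by omega⟩
  have hr : (FreeGroup.of i * FreeGroup.of j * FreeGroup.of i *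
      (FreeGroup.of j * FreeGroup.of i * FreeGroup.of j)⁻¹) ∈ braidRels 3 :=
    Or.inr ⟨i, j, rfl, rfl⟩
  have h1 : PresentedGroup.mk (braidRels 3) (FreeGroup.of i * FreeGroup.of j * FreeGroup.of i *
      (FreeGroup.of j * FreeGroup.of i * FreeGroup.of j)⁻¹) = 1 := by
    apply (QuotientGroup.eq_one_iff _).mpr
    exact Subgroup.subset_normalClosure hr
  simp only [map_mul, map_inv] at h1
  have := mul_eq_one_iff_eq_inv.mp h1
  rw [inv_inv] at this
  exact this

lemma conj_pow3 {G : Type*} [Group G] (a b : G) (n : ℕ) :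
    (a * b * a⁻¹) ^ n = a * b ^ n * a⁻¹ := by
  induction n with
  | zero => simp
  | succ k ih => rw [pow_succ, pow_succ, ih]; group

/-- In `B₃` with `a₁ = σ₁`, `a₂ = σ₂`, `a₃ = σ₂ σ₁ σ₂⁻¹`: for `n₁, n₂, n₃ ≥ 1` and any product
`W` of the `aᵢ`, the braid `a₁⁻¹ a₂^{n₁} a₃^{n₂} a₁^{n₃} W` is quasipositive. -/
theorem three_braid_NP_quasipositive (n1 n2 n3 : ℕ)
    (h1 : 1 ≤ n1) (h2 : 1 ≤ n2) (h3 : 1 ≤ n3) (W : BraidGroup 3)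
    (hW : W ∈ Submonoid.closure
      {sigma 3 1, sigma 3 2, sigma 3 2 * sigma 3 1 * (sigma 3 2)⁻¹}) :
    Quasipositive 3 ((sigma 3 1)⁻¹ * sigma 3 2 ^ n1 *
      (sigma 3 2 * sigma 3 1 * (sigma 3 2)⁻¹) ^ n2 * sigma 3 1 ^ n3 * W) := by
  set s1 := sigma 3 1
  set s2 := sigma 3 2
  set S : Set (BraidGroup 3) :=
    {x : BraidGroup 3 | ∃ (α : BraidGroup 3) (k : ℕ), 1 ≤ k ∧ k ≤ 3 - 1 ∧
      x = α * sigma 3 k * α⁻¹}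
  -- basic members of S
  have hs1 : s1 ∈ S := ⟨1, 1, le_refl 1, by omega, by group; rfl⟩
  have hs2 : s2 ∈ S := ⟨1, 2, by omega, by omega, by group; rfl⟩
  have ha3 : s2 * s1 * s2⁻¹ ∈ S := ⟨s2, 1, le_refl 1, by omega, rfl⟩
  have hc : s1⁻¹ * s2 * s1 ∈ S := ⟨s1⁻¹, 2, by omega, by omega, by group; rfl⟩
  have hd : (s1⁻¹ * s1⁻¹) * s2 * (s1 * s1) ∈ S :=
    ⟨s1⁻¹ * s1⁻¹, 2, by omega, by omega, by rw [show sigma 3 2 = s2 from rfl, mul_inv_rev, inv_inv]⟩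
  -- the conjugation relation a₃ = s1⁻¹ s2 s1
  have hrel : s2 * s1 * s2⁻¹ = s1⁻¹ * s2 * s1 := by
    have h := braid_rel3
    change s1 * s2 * s1 = s2 * s1 * s2 at h
    have := congrArg (fun x => s1⁻¹ * x * s2⁻¹) h
    simpa [mul_assoc] using this
  obtain ⟨m, rfl⟩ : ∃ m, n3 = m + 1 := ⟨n3 - 1, by omega⟩
  -- rewrite the element
  have key : s1⁻¹ * s2 ^ n1 * (s2 * s1 * s2⁻¹) ^ n2 * s1 ^ (m + 1) * W =
      (s1⁻¹ * s2 * s1) ^ n1 * ((s1⁻¹ * s1⁻¹) * s2 * (s1 * s1)) ^ n2 * s1 ^ m * W := by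
    rw [hrel]
    have e1 : (s1⁻¹ * s2 * s1) ^ n1 = s1⁻¹ * s2 ^ n1 * s1 := by
      have := conj_pow3 s1⁻¹ s2 n1; simpa using this
    have e2 : (s1⁻¹ * s2 * s1) ^ n2 = s1⁻¹ * s2 ^ n2 * s1 := by
      have := conj_pow3 s1⁻¹ s2 n2; simpa using this
    have e3 : ((s1⁻¹ * s1⁻¹) * s2 * (s1 * s1)) ^ n2 =
        (s1⁻¹ * s1⁻¹) * s2 ^ n2 * (s1 * s1) := by
      have := conj_pow3 (s1⁻¹ * s1⁻¹) s2 n2; simpa using this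
    rw [e1, e2, e3, pow_succ]
    group
  rw [key]
  unfold Quasipositive
  exact Submonoid.mul_mem _ (Submonoid.mul_mem _ (Submonoid.mul_mem _
    (Submonoid.pow_mem _ (Submonoid.subset_closure hc) n1)
    (Submonoid.pow_mem _ (Submonoid.subset_closure hd) n2))
    (Submonoid.pow_mem _ (Submonoid.subset_closure hs1) m))
    (Submonoid.closure_mono (by
      intro x hx
      rcases hx with h | h | h
      · exact h ▸ hs1
      · exact h ▸ hs2
      · exact h ▸ ha3) hW)
end

section
/- In B_4, let β, β', β'' be strongly quasipositive braids (possibly trivial). Then the braid σ_{1,2}^{−1} β σ_{1,3} β' σ_{2,3} β'' is quasipositive, and the braid σ_{1,2}^{−1} β σ_{1,4} β' σ_{2,4} β'' is quasipositive. -/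
-- auxiliary lemmas
lemma qp_conj {n : ℕ} (g : BraidGroup n) {x : BraidGroup n} (h : Quasipositive n x) :
    Quasipositive n (g * x * g⁻¹) := by
  induction h using Submonoid.closure_induction with
  | mem y hy =>
    obtain ⟨α, k, h1, h2, rfl⟩ := hy
    exact Submonoid.subset_closure ⟨g * α, k, h1, h2, by group⟩
  | one => rw [mul_one, mul_inv_cancel]; exact Submonoid.one_mem _
  | mul y z _ _ hy hz =>
    have : g * (y * z) * g⁻¹ = (g * y * g⁻¹) * (g * z * g⁻¹) := by group
    rw [this]; exact Submonoid.mul_mem _ hy hz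

lemma sqp_qp {n : ℕ} {x : BraidGroup n} (h : StronglyQuasipositive n x) :
    Quasipositive n x := by
  refine Submonoid.closure_le.2 ?_ h
  rintro y ⟨i, j, h1, h2, h3, rfl⟩
  exact Submonoid.subset_closure ⟨bandConj n i j, i, h1, by omega, rfl⟩

lemma qp_decomp {n : ℕ} (a b c β β' β'' : BraidGroup n)
    (hβ : StronglyQuasipositive n β) (hβ' : StronglyQuasipositive n β')
    (hβ'' : StronglyQuasipositive n β'')
    (h : Quasipositive n (a⁻¹ * b * c)) :
    Quasipositive n (a⁻¹ * β * b * β' * c * β'') := by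
  have key : a⁻¹ * β * b * β' * c * β'' =
      (a⁻¹ * β * a⁻¹⁻¹) * ((a⁻¹ * b) * β' * (a⁻¹ * b)⁻¹) * (a⁻¹ * b * c) * β'' := by group
  rw [key]
  exact Submonoid.mul_mem _ (Submonoid.mul_mem _
    (Submonoid.mul_mem _ (qp_conj _ (sqp_qp hβ)) (qp_conj _ (sqp_qp hβ'))) h) (sqp_qp hβ'')

lemma sigma_eq (k : ℕ) (m : Fin 3) (h1 : 1 ≤ k) (h2 : k ≤ 3) (hm : (m : ℕ) = k - 1) :
    sigma 4 k = PresentedGroup.of m := by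
  rw [sigma, dif_pos ⟨h1, h2⟩]
  congr 1
  exact Fin.ext hm.symm

lemma braid_comm13 : sigma 4 1 * sigma 4 3 = sigma 4 3 * sigma 4 1 := by
  have hr : (FreeGroup.of (⟨0, by omega⟩ : Fin 3) * FreeGroup.of (⟨2, by omega⟩ : Fin 3) *
      (FreeGroup.of (⟨0, by omega⟩ : Fin 3))⁻¹ * (FreeGroup.of (⟨2, by omega⟩ : Fin 3))⁻¹)
      ∈ braidRels 4 := Or.inl ⟨⟨0, by omega⟩, ⟨2, by omega⟩, by norm_num, rfl⟩
  have h1 : (PresentedGroup.mk (braidRels 4)) (FreeGroup.of (⟨0, by omega⟩ : Fin 3) *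
      FreeGroup.of (⟨2, by omega⟩ : Fin 3) * (FreeGroup.of (⟨0, by omega⟩ : Fin 3))⁻¹ *
      (FreeGroup.of (⟨2, by omega⟩ : Fin 3))⁻¹) = 1 :=
    (QuotientGroup.eq_one_iff _).2 (Subgroup.subset_normalClosure hr)
  simp only [map_mul, map_inv] at h1
  rw [sigma_eq 1 ⟨0, by omega⟩ (by norm_num) (by norm_num) rfl,
      sigma_eq 3 ⟨2, by omega⟩ (by norm_num) (by norm_num) rfl]
  show (PresentedGroup.mk (braidRels 4)) (FreeGroup.of _) * (PresentedGroup.mk (braidRels 4)) (FreeGroup.of _) = _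
  set A := (PresentedGroup.mk (braidRels 4)) (FreeGroup.of (⟨0, by omega⟩ : Fin 3)) with hA
  set B := (PresentedGroup.mk (braidRels 4)) (FreeGroup.of (⟨2, by omega⟩ : Fin 3)) with hB
  calc A * B = (A * B * A⁻¹ * B⁻¹) * (B * A) := by group
    _ = B * A := by rw [h1]; group

lemma band12 : band 4 1 2 = sigma 4 1 := by
  simp [band, bandConj]

lemma band13 : band 4 1 3 = sigma 4 2 * sigma 4 1 * (sigma 4 2)⁻¹ := by
  simp [band, bandConj, List.range_succ]

lemma band23 : band 4 2 3 = sigma 4 2 := by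
  simp [band, bandConj]

lemma band14 : band 4 1 4 =
    sigma 4 3 * sigma 4 2 * sigma 4 1 * (sigma 4 3 * sigma 4 2)⁻¹ := by
  simp [band, bandConj, List.range_succ, mul_assoc]

lemma band24 : band 4 2 4 = sigma 4 3 * sigma 4 2 * (sigma 4 3)⁻¹ := by
  simp [band, bandConj, List.range_succ]


/-- In `B₄`, for strongly quasipositive `β, β', β''`, the braids
`σ_{1,2}⁻¹ β σ_{1,3} β' σ_{2,3} β''` and `σ_{1,2}⁻¹ β σ_{1,4} β' σ_{2,4} β''`
are quasipositive. -/
theorem claim_obs1 (β β' β'' : BraidGroup 4)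
    (hβ : StronglyQuasipositive 4 β) (hβ' : StronglyQuasipositive 4 β')
    (hβ'' : StronglyQuasipositive 4 β'') :
    Quasipositive 4 ((band 4 1 2)⁻¹ * β * band 4 1 3 * β' * band 4 2 3 * β'') ∧
    Quasipositive 4 ((band 4 1 2)⁻¹ * β * band 4 1 4 * β' * band 4 2 4 * β'') := by
  constructor
  · apply qp_decomp _ _ _ _ _ _ hβ hβ' hβ''
    apply Submonoid.subset_closure
    refine ⟨(sigma 4 1)⁻¹, 2, by norm_num, by norm_num, ?_⟩
    rw [band12, band13, band23]; group
  · apply qp_decomp _ _ _ _ _ _ hβ hβ' hβ''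
    apply Submonoid.subset_closure
    refine ⟨(sigma 4 1)⁻¹ * sigma 4 3, 2, by norm_num, by norm_num, ?_⟩
    rw [band12, band14, band24]
    have hc3 : (sigma 4 3)⁻¹ * sigma 4 1 = sigma 4 1 * (sigma 4 3)⁻¹ := by
      calc (sigma 4 3)⁻¹ * sigma 4 1
          = (sigma 4 3)⁻¹ * (sigma 4 1 * sigma 4 3) * (sigma 4 3)⁻¹ := by group
        _ = (sigma 4 3)⁻¹ * (sigma 4 3 * sigma 4 1) * (sigma 4 3)⁻¹ := by rw [braid_comm13]
        _ = sigma 4 1 * (sigma 4 3)⁻¹ := by group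
    calc (sigma 4 1)⁻¹ * (sigma 4 3 * sigma 4 2 * sigma 4 1 * (sigma 4 3 * sigma 4 2)⁻¹) *
          (sigma 4 3 * sigma 4 2 * (sigma 4 3)⁻¹)
        = (sigma 4 1)⁻¹ * sigma 4 3 * sigma 4 2 * (sigma 4 1 * (sigma 4 3)⁻¹) := by group
      _ = (sigma 4 1)⁻¹ * sigma 4 3 * sigma 4 2 * ((sigma 4 3)⁻¹ * sigma 4 1) := by rw [hc3]
      _ = (sigma 4 1)⁻¹ * sigma 4 3 * sigma 4 2 * ((sigma 4 1)⁻¹ * sigma 4 3)⁻¹ := by group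
end
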